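/- For every h ∈ C²[a,b], |B(h)| ≤ (3(b-a)²/32) ‖h''‖_∞, where B is the Bullen functional. -/

import Mathlib

open Set intervalIntegral

noncomputable def supOn (a b : ℝ) (f : ℝ → ℝ) : ℝ := ⨆ x : Set.Icc a b, |f x|

def IsC2On (a b : ℝ) (g g' g'' : ℝ → ℝ) : Prop :=
  (∀ x ∈ Set.Icc a b, HasDerivWithinAt g (g' x) (Set.Icc a b) x) ∧
  (∀ x ∈ Set.Icc a b, HasDerivWithinAt g' (g'' x) (Set.Icc a b) x) ∧
  ContinuousOn g'' (Set.Icc a b)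

noncomputable def KF (a b t : ℝ) (f : ℝ → ℝ) : ℝ :=
  sInf {v : ℝ | ∃ g g' g'', IsC2On a b g g' g'' ∧
    v = supOn a b (fun x => f x - g x) + t * supOn a b g''}

noncomputable def bullen (a b : ℝ) (f : ℝ → ℝ) : ℝ :=
  (f a + f b) / 2 + f ((a + b) / 2) - (2 / (b - a)) * ∫ x in a..b, f x

noncomputable def bullenC (a b : ℝ) (n : ℕ) (x : ℕ → ℝ) (f : ℝ → ℝ) : ℝ :=
  (1 / (b - a)) * ∑ i ∈ Finset.range n, (x (i+1) - x i) *
    ((f (x i) + f (x (i+1))) / 2 + f ((x i + x (i+1)) / 2)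
      - (2 / (x (i+1) - x i)) * ∫ t in (x i)..(x (i+1)), f t)

noncomputable def omega1 (a b : ℝ) (f : ℝ → ℝ) (h : ℝ) : ℝ :=
  sSup {v : ℝ | ∃ x ∈ Set.Icc a b, ∃ y ∈ Set.Icc a b, |x - y| ≤ h ∧ v = |f x - f y|}

noncomputable def omega2 (a b : ℝ) (f : ℝ → ℝ) (h : ℝ) : ℝ :=
  sSup {v : ℝ | ∃ x t : ℝ, 0 ≤ t ∧ t ≤ h ∧ x - t ∈ Set.Icc a b ∧ x + t ∈ Set.Icc a b ∧
    v = |f (x + t) - 2 * f x + f (x - t)|}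

lemma intK (c d : ℝ) : ∫ x in c..d, (x-c)*(d-x) = (d-c)^3/6 := by
  have hd : ∀ x ∈ uIcc c d, HasDerivAt (fun x => -(x^3)/3 + (c+d)*x^2/2 - c*d*x) ((x-c)*(d-x)) x := by
    intro x _
    have : HasDerivAt (fun x : ℝ => -(x^3)/3 + (c+d)*x^2/2 - c*d*x)
        (-(3*x^2)/3 + (c+d)*(2*x)/2 - c*d) x := by
      apply HasDerivAt.sub
      apply HasDerivAt.add
      · exact ((hasDerivAt_pow 3 x).neg).div_const 3 |>.congr_deriv (by push_cast; ring)
      · exact (((hasDerivAt_pow 2 x).const_mul (c+d)).div_const 2).congr_deriv (by push_cast; ring)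
      · exact (hasDerivAt_id x).const_mul (c*d) |>.congr_deriv (by ring)
    exact this.congr_deriv (by ring)
  rw [intervalIntegral.integral_eq_sub_of_hasDerivAt hd
    ((Continuous.intervalIntegrable (by continuity) c d))]
  ring

lemma keyIbp (a b c d : ℝ) (h h' h'' : ℝ → ℝ) (hh : IsC2On a b h h' h'')
    (hc : a ≤ c) (hcd : c ≤ d) (hd : d ≤ b) :
    ∫ x in c..d, (x-c)*(d-x) * h'' x = (d-c)*(h c + h d) - 2 * ∫ x in c..d, h x := by
  obtain ⟨h1, h2, h3⟩ := hh
  have hsub : Icc c d ⊆ Icc a b := Icc_subset_Icc hc hd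
  have hconth : ContinuousOn h (Icc a b) := fun x hx => (h1 x hx).continuousWithinAt
  have hconth' : ContinuousOn h' (Icc a b) := fun x hx => (h2 x hx).continuousWithinAt
  set G : ℝ → ℝ := fun x => (x-c)*(d-x) * h' x - (c+d-2*x) * h x with hG
  have hderiv : ∀ x ∈ Ioo c d, HasDerivAt G ((x-c)*(d-x) * h'' x + 2 * h x) x := by
    intro x hx
    have hxab : x ∈ Ioo a b := ⟨lt_of_le_of_lt hc hx.1, lt_of_lt_of_le hx.2 hd⟩
    have hmem : Icc a b ∈ nhds x := Icc_mem_nhds hxab.1 hxab.2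
    have hhx : HasDerivAt h (h' x) x := (h1 x (Ioo_subset_Icc_self hxab)).hasDerivAt hmem
    have hh'x : HasDerivAt h' (h'' x) x := (h2 x (Ioo_subset_Icc_self hxab)).hasDerivAt hmem
    have hK : HasDerivAt (fun x => (x-c)*(d-x)) (c+d-2*x) x := by
      have : HasDerivAt (fun x : ℝ => (x-c)*(d-x)) (1*(d-x) + (x-c)*(0-1)) x :=
        ((hasDerivAt_id x).sub_const c).mul ((hasDerivAt_const x d).sub (hasDerivAt_id x))
      exact this.congr_deriv (by ring)
    have hL : HasDerivAt (fun x : ℝ => c+d-2*x) (-2) x := by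
      have : HasDerivAt (fun x : ℝ => c+d-2*x) (0 - 2*1) x :=
        (hasDerivAt_const x (c+d)).sub ((hasDerivAt_id x).const_mul 2)
      exact this.congr_deriv (by ring)
    have := (hK.mul hh'x).sub (hL.mul hhx)
    exact this.congr_deriv (by ring)
  have hcontG : ContinuousOn G (Icc c d) := by
    apply ContinuousOn.sub
    · exact ((continuousOn_id.sub continuousOn_const).mul
        (continuousOn_const.sub continuousOn_id)).mul (hconth'.mono hsub)
    · exact (continuousOn_const.sub (continuousOn_const.mul continuousOn_id)).mul
        (hconth.mono hsub)
  have hcontInt : ContinuousOn (fun x => (x-c)*(d-x) * h'' x + 2 * h x) (Icc c d) := by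
    apply ContinuousOn.add
    · exact ((continuousOn_id.sub continuousOn_const).mul
        (continuousOn_const.sub continuousOn_id)).mul (h3.mono hsub)
    · exact continuousOn_const.mul (hconth.mono hsub)
  have hint : IntervalIntegrable (fun x => (x-c)*(d-x) * h'' x + 2 * h x) MeasureTheory.volume c d :=
    (hcontInt.mono (by rw [uIcc_of_le hcd])).intervalIntegrable
  have heq : ∫ x in c..d, ((x-c)*(d-x) * h'' x + 2 * h x) = G d - G c := by
    apply intervalIntegral.integral_eq_sub_of_hasDeriv_right_of_le hcd hcontG
      (fun x hx => (hderiv x hx).hasDerivWithinAt) hint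
  have hint1 : IntervalIntegrable (fun x => (x-c)*(d-x) * h'' x) MeasureTheory.volume c d := by
    apply ContinuousOn.intervalIntegrable
    rw [uIcc_of_le hcd]
    exact ((continuousOn_id.sub continuousOn_const).mul
        (continuousOn_const.sub continuousOn_id)).mul (h3.mono hsub)
  have hint2 : IntervalIntegrable (fun x => 2 * h x) MeasureTheory.volume c d := by
    apply ContinuousOn.intervalIntegrable
    rw [uIcc_of_le hcd]
    exact continuousOn_const.mul (hconth.mono hsub)
  rw [intervalIntegral.integral_add hint1 hint2] at heq
  rw [intervalIntegral.integral_const_mul] at heq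
  have : G d - G c = (d-c)*(h c + h d) := by simp only [hG]; ring
  linarith [heq]

lemma boundI (a b c d M : ℝ) (h'' : ℝ → ℝ) (hcont : ContinuousOn h'' (Icc a b))
    (hc : a ≤ c) (hcd : c ≤ d) (hd : d ≤ b)
    (hM : ∀ x ∈ Icc a b, |h'' x| ≤ M) :
    |∫ x in c..d, (x-c)*(d-x) * h'' x| ≤ M * (d-c)^3/6 := by
  have hsub : Icc c d ⊆ Icc a b := Icc_subset_Icc hc hd
  have hcK : ContinuousOn (fun x => (x-c)*(d-x) * h'' x) (Icc c d) :=
    ((continuousOn_id.sub continuousOn_const).mul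
        (continuousOn_const.sub continuousOn_id)).mul (hcont.mono hsub)
  have h1 : IntervalIntegrable (fun x => |(x-c)*(d-x) * h'' x|) MeasureTheory.volume c d :=
    (hcK.abs.mono (by rw [uIcc_of_le hcd])).intervalIntegrable
  have h2 : IntervalIntegrable (fun x => (x-c)*(d-x) * M) MeasureTheory.volume c d :=
    (Continuous.intervalIntegrable (by continuity) c d)
  calc |∫ x in c..d, (x-c)*(d-x) * h'' x| ≤ ∫ x in c..d, |(x-c)*(d-x) * h'' x| :=
        intervalIntegral.abs_integral_le_integral_abs hcd
    _ ≤ ∫ x in c..d, (x-c)*(d-x) * M := by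
        apply intervalIntegral.integral_mono_on hcd h1 h2
        intro x hx
        have hK0 : 0 ≤ (x-c)*(d-x) := mul_nonneg (by linarith [hx.1]) (by linarith [hx.2])
        rw [abs_mul, abs_of_nonneg hK0]
        exact mul_le_mul_of_nonneg_left (hM x (hsub hx)) hK0
    _ = M * (d-c)^3/6 := by
        rw [intervalIntegral.integral_mul_const, intK]; ring

theorem stmt19 (a b : ℝ) (hab : a < b) (h h' h'' : ℝ → ℝ)
    (hh : IsC2On a b h h' h'') :
    |bullen a b h| ≤ (3 * (b - a) ^ 2 / 32) * supOn a b h'' := by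
  obtain ⟨h1, h2, h3⟩ := hh
  set m := (a+b)/2 with hm
  have hm1 : a ≤ m := by simp only [hm]; linarith
  have hm2 : m ≤ b := by simp only [hm]; linarith
  set M := supOn a b h'' with hMdef
  have hMbd : ∀ x ∈ Icc a b, |h'' x| ≤ M := by
    intro x hx
    have hbdd : BddAbove (Set.range fun x : Icc a b => |h'' x|) := by
      have := (isCompact_Icc.image_of_continuousOn h3.abs).bddAbove
      rwa [Set.image_eq_range] at this
    exact le_ciSup hbdd ⟨x, hx⟩
  have hM0 : 0 ≤ M := le_trans (abs_nonneg _) (hMbd a ⟨le_refl a, le_of_lt hab⟩)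
  have hconth : ContinuousOn h (Icc a b) := fun x hx => (h1 x hx).continuousWithinAt
  have hI1 := keyIbp a b a m h h' h'' ⟨h1, h2, h3⟩ (le_refl a) hm1 hm2
  have hI2 := keyIbp a b m b h h' h'' ⟨h1, h2, h3⟩ hm1 hm2 (le_refl b)
  have hintadd : (∫ x in a..m, h x) + (∫ x in m..b, h x) = ∫ x in a..b, h x := by
    apply intervalIntegral.integral_add_adjacent_intervals
    · exact ((hconth.mono (Icc_subset_Icc (le_refl a) hm2)).mono
        (by rw [uIcc_of_le hm1])).intervalIntegrable
    · exact ((hconth.mono (Icc_subset_Icc hm1 (le_refl b))).mono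
        (by rw [uIcc_of_le hm2])).intervalIntegrable
  have hB1 := boundI a b a m M h'' h3 (le_refl a) hm1 hm2 hMbd
  have hB2 := boundI a b m b M h'' h3 hm1 hm2 (le_refl b) hMbd
  have hba : (0:ℝ) < b - a := by linarith
  have hrepr : (b-a) * bullen a b h =
      (∫ x in a..m, (x-a)*(m-x) * h'' x) + ∫ x in m..b, (x-m)*(b-x) * h'' x := by
    rw [hI1, hI2, bullen]
    have : (b-a) * ((2 / (b - a)) * ∫ x in a..b, h x) = 2 * ∫ x in a..b, h x := by
      field_simp
    rw [← hintadd] at this ⊢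
    simp only [hm] at *
    nlinarith [this]
  have habs : (b-a) * |bullen a b h| ≤ M * (b-a)^3/24 := by
    have : |(b-a) * bullen a b h| ≤ M * ((m-a)^3)/6 + M * ((b-m)^3)/6 := by
      rw [hrepr]; exact le_trans (abs_add_le _ _) (by linarith)
    rw [abs_mul, abs_of_pos hba] at this
    have hma : m - a = (b-a)/2 := by simp only [hm]; ring
    have hbm : b - m = (b-a)/2 := by simp only [hm]; ring
    rw [hma, hbm] at this
    nlinarith [this]
  nlinarith [habs, abs_nonneg (bullen a b h), sq_nonneg (b-a), mul_pos hba hba]
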